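/- Let t be an n×n matrix over a field of characteristic zero, with n odd, such that the trace of t^i is zero for every odd i with 0 < i < n. Then in the characteristic polynomial charpoly(t) = X^n + Σ_{i=1}^n c_i X^{n−i}, the coefficient c_i vanishes for every odd i with 0 < i < n. -/

import Mathlib

universe u

section
open Polynomial Matrix Module Module.Free LinearMap
lemma charpoly_of_sub_alg_nilpotent {K : Type*} [Field K] {m : Type*} [Fintype m] [DecidableEq m]
    (A : Matrix m m K) (μ : K) (h : IsNilpotent (A - algebraMap K (Matrix m m K) μ)) :
    A.charpoly = (X - C μ) ^ Fintype.card m := by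
  set N := A - algebraMap K (Matrix m m K) μ with hN
  have hNc : N.charpoly = X ^ Fintype.card m := by
    have := Matrix.isNilpotent_charpoly_sub_pow_of_isNilpotent h
    rwa [isNilpotent_iff_eq_zero, sub_eq_zero] at this
  have key : (aeval (X - C μ) : K[X] →ₐ[K] K[X]).mapMatrix (charmatrix N) = charmatrix A := by
    ext i j
    by_cases hij : i = j
    · subst hij
      simp [charmatrix_apply_eq, hN, Matrix.algebraMap_matrix_apply, map_sub, aeval_X, aeval_C,
        AlgHom.mapMatrix_apply, Matrix.map_apply]
    · simp [AlgHom.mapMatrix_apply, Matrix.map_apply, charmatrix_apply_ne _ _ _ hij, hN,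
        Matrix.algebraMap_matrix_apply, hij]
  calc A.charpoly = (charmatrix A).det := rfl
    _ = ((aeval (X - C μ) : K[X] →ₐ[K] K[X]).mapMatrix (charmatrix N)).det := by rw [key]
    _ = aeval (X - C μ) N.charpoly := (AlgHom.map_det _ _).symm
    _ = (X - C μ) ^ Fintype.card m := by rw [hNc]; simp


lemma end_charpoly_of_nilpotent_shift {K : Type*} [Field K] {V : Type*} [AddCommGroup V]
    [Module K V] [FiniteDimensional K V] (f : Module.End K V) (μ : K)
    (h : IsNilpotent (f - algebraMap K (Module.End K V) μ)) :
    f.charpoly = (X - C μ) ^ finrank K V := by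
  classical
  let b := chooseBasis K V
  have hA : IsNilpotent (LinearMap.toMatrixAlgEquiv b (f - algebraMap K (Module.End K V) μ)) :=
    h.map _
  rw [map_sub, AlgEquiv.commutes] at hA
  have h2 := charpoly_of_sub_alg_nilpotent (LinearMap.toMatrixAlgEquiv b f) μ hA
  have e : (toMatrixAlgEquiv b) f = toMatrix b b f := rfl
  rw [e] at h2
  rw [← f.charpoly_toMatrix b, h2, finrank_eq_card_chooseBasisIndex]

lemma end_trace_pow_of_nilpotent_shift {K : Type*} [Field K] {V : Type*} [AddCommGroup V]
    [Module K V] [FiniteDimensional K V] (f : Module.End K V) (μ : K)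
    (h : IsNilpotent (f - algebraMap K (Module.End K V) μ)) (k : ℕ) :
    trace K V (f ^ k) = (finrank K V : K) * μ ^ k := by
  set b := algebraMap K (Module.End K V) μ with hb
  have hc : Commute f b := (Algebra.commutes μ f).symm
  have hcf : Commute (f - b) f := ((Commute.refl f).sub_left hc.symm)
  have hcb : Commute (f - b) b := (hc.sub_left (Commute.refl b))
  have hS : Commute (∑ i ∈ Finset.range k, f ^ i * b ^ (k - 1 - i)) (f - b) := by
    apply Commute.sum_left
    intro i _
    exact ((hcf.symm.pow_left i).mul_left ((hcb.symm.pow_left _)) : _)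
  have hnil : IsNilpotent (f ^ k - b ^ k) := by
    rw [← hc.geom_sum₂_mul k]
    exact hS.isNilpotent_mul_left h
  have h1 : trace K V (f ^ k - b ^ k) = 0 :=
    (LinearMap.isNilpotent_trace_of_isNilpotent hnil).eq_zero
  have h2 : trace K V (b ^ k) = (finrank K V : K) * μ ^ k := by
    rw [hb, ← map_pow, Module.algebraMap_end_eq_smul_id, _root_.map_smul, trace_id, smul_eq_mul, mul_comm]
  calc trace K V (f ^ k) = trace K V (f ^ k - b ^ k) + trace K V (b ^ k) := by
        rw [← map_add]; congr 1; abel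
    _ = (finrank K V : K) * μ ^ k := by rw [h1, h2, zero_add]
end

section
open Polynomial Module Module.Free LinearMap


lemma end_trace_pow_eq_sum_pow_roots {K : Type*} [Field K] [IsAlgClosed K] :
    ∀ (d : ℕ) (V : Type u) [AddCommGroup V] [Module K V] [FiniteDimensional K V],
      finrank K V = d → ∀ (f : Module.End K V) (k : ℕ), 0 < k →
      trace K V (f ^ k) = (f.charpoly.roots.map (· ^ k)).sum := by
  intro d
  induction d using Nat.strong_induction_on with
  | _ d IH =>
  intro V _ _ _ hd f k hk
  rcases Nat.eq_zero_or_pos d with hd0 | hdpos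
  · subst hd0
    have hsub : Subsingleton V := Module.finrank_zero_iff.mp hd
    have h1 : (f ^ k) = 0 := Subsingleton.elim _ _
    have h2 : f.charpoly = 1 := by
      have h3 := f.charpoly_natDegree (R := K)
      rw [hd] at h3
      exact (Polynomial.Monic.natDegree_eq_zero f.charpoly_monic).mp h3
    simp [h1, h2]
  · have hnt : Nontrivial V := Module.nontrivial_of_finrank_pos (hd ▸ hdpos)
    obtain ⟨μ, hμ⟩ := Module.End.exists_eigenvalue f
    set φ := f - algebraMap K (Module.End K V) μ with hφ
    set V₁ := ⨆ (m : ℕ), LinearMap.ker (φ ^ m) with hV₁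
    set W := ⨅ (m : ℕ), LinearMap.range (φ ^ m) with hW
    have hVW : IsCompl V₁ W := LinearMap.isCompl_iSup_ker_pow_iInf_range_pow φ
    have hcomm : Commute φ f := by
      rw [hφ]; exact (Commute.refl f).sub_left (Algebra.commutes μ f)
    have hVmem : ∀ x, x ∈ V₁ ↔ ∃ m, (φ ^ m) x = 0 := by
      have hV' : V₁ = φ.maxGenEigenspace 0 := by
        simp [hV₁, Module.End.maxGenEigenspace, ← Module.End.iSup_genEigenspace_eq,
          Module.End.genEigenspace_nat]
      intro x
      rw [hV', Module.End.mem_maxGenEigenspace]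
      simp
    have hφV : ∀ x ∈ V₁, f x ∈ V₁ := by
      intro x hx
      obtain ⟨m, hm⟩ := (hVmem x).mp hx
      refine (hVmem (f x)).mpr ⟨m, ?_⟩
      have := congrArg (fun (g : Module.End K V) => g x) (hcomm.pow_left m).eq
      simp only [Module.End.mul_apply] at this
      rw [this, hm, map_zero]
    have hφW : ∀ x ∈ W, f x ∈ W := by
      intro x hx
      simp only [hW, Submodule.mem_iInf, LinearMap.mem_range] at hx ⊢
      intro m
      obtain ⟨y, hy⟩ := hx m
      refine ⟨f y, ?_⟩
      have := congrArg (fun (g : Module.End K V) => g y) (hcomm.pow_left m).eq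
      simp only [Module.End.mul_apply] at this
      rw [this, hy]
    set F := f.restrict hφV with hF
    set G := f.restrict hφW with hG
    set ψ := F.prodMap G with hψdef
    set e := Submodule.prodEquivOfIsCompl V₁ W hVW with he
    have hψ : ψ = e.symm.conj f := by
      apply (Module.Free.chooseBasis K V₁ |>.prod (Module.Free.chooseBasis K W)).ext
      simp only [Basis.prod_apply, coe_inl, coe_inr, prodMap_apply, LinearEquiv.conj_apply,
        LinearEquiv.symm_symm, Submodule.coe_prodEquivOfIsCompl, coe_comp, LinearEquiv.coe_coe,
        Function.comp_apply, coprod_apply, Submodule.coe_subtype, map_add, Sum.forall, Sum.elim_inl,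
        map_zero, ZeroMemClass.coe_zero, add_zero, LinearEquiv.eq_symm_apply, and_self,
        Submodule.coe_prodEquivOfIsCompl', restrict_coe_apply, implies_true, Sum.elim_inr, zero_add,
        e, V₁, W, ψ, F, G]
    have hchar : f.charpoly = F.charpoly * G.charpoly := by
      rw [← e.symm.charpoly_conj f, ← hψ, hψdef, charpoly_prodMap]
    have htr : ∀ j : ℕ, trace K V (f ^ j) = trace K V₁ (F ^ j) + trace K W (G ^ j) := by
      intro j
      have hconj : e.symm.conj (f ^ j) = (F ^ j).prodMap (G ^ j) := by
        induction j with
        | zero => simp only [pow_zero, Module.End.one_eq_id, LinearEquiv.conj_id, prodMap_id]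
        | succ j ih =>
          rw [pow_succ, pow_succ, pow_succ, Module.End.mul_eq_comp, Module.End.mul_eq_comp,
            Module.End.mul_eq_comp, LinearEquiv.conj_comp, ih, ← hψ, hψdef, ← prodMap_comp]
      calc trace K V (f ^ j) = trace K (V₁ × W) (e.symm.conj (f ^ j)) := (trace_conj' _ _).symm
        _ = trace K V₁ (F ^ j) + trace K W (G ^ j) := by rw [hconj, trace_prodMap']
    have hdim : finrank K V₁ + finrank K W = d := by
      rw [← hd]; exact Submodule.finrank_add_eq_of_isCompl hVW
    have hV₁pos : 0 < finrank K V₁ := by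
      obtain ⟨v, hv⟩ := hμ.exists_hasEigenvector
      have hvV : v ∈ V₁ := by
        refine (hVmem v).mpr ⟨1, ?_⟩
        have := hv.apply_eq_smul
        simp [pow_one, hφ, LinearMap.sub_apply, algebraMap_end_apply, this]
      have : Nontrivial V₁ := ⟨⟨⟨v, hvV⟩, 0, by simp [Subtype.ext_iff, hv.2]⟩⟩
      exact Module.finrank_pos
    have hWd : finrank K W < d := by omega
    have hΦV : ∀ x ∈ V₁, φ x ∈ V₁ := by
      intro x hx
      obtain ⟨m, hm⟩ := (hVmem x).mp hx
      refine (hVmem (φ x)).mpr ⟨m, ?_⟩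
      have h5 : (φ ^ m) (φ x) = φ ((φ ^ m) x) := by
        rw [← Module.End.mul_apply, ← Module.End.mul_apply, ← pow_succ, ← pow_succ']
      rw [h5, hm, map_zero]
    have hFsub : F - algebraMap K (Module.End K V₁) μ = φ.restrict hΦV := by
      refine LinearMap.ext fun x => Subtype.ext ?_
      simp [hF, restrict_apply, hφ, LinearMap.sub_apply, algebraMap_end_apply]
    have hΦnil : IsNilpotent (φ.restrict hΦV) := by
      apply ((charpoly_nilpotent_tfae (φ.restrict hΦV)).out 2 0).mp
      rintro ⟨x, hx⟩
      obtain ⟨m, hm⟩ := (hVmem x).mp hx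
      refine ⟨m, ?_⟩
      apply Subtype.ext
      rw [ZeroMemClass.coe_zero]
      refine .trans ?_ hm
      generalize_proofs h'
      clear hm
      induction m with
      | zero => simp only [pow_zero, Module.End.one_apply]
      | succ m ih => simp only [pow_succ', Module.End.mul_apply, ih, restrict_apply]
    have hFnil : IsNilpotent (F - algebraMap K (Module.End K V₁) μ) := hFsub ▸ hΦnil
    have hFchar : F.charpoly = (X - C μ) ^ finrank K V₁ :=
      end_charpoly_of_nilpotent_shift F μ hFnil
    have hFtr : trace K V₁ (F ^ k) = (finrank K V₁ : K) * μ ^ k :=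
      end_trace_pow_of_nilpotent_shift F μ hFnil k
    have hGtr : trace K W (G ^ k) = (G.charpoly.roots.map (· ^ k)).sum :=
      IH (finrank K W) hWd W rfl G k hk
    have hroots : f.charpoly.roots = finrank K V₁ • ({μ} : Multiset K) + G.charpoly.roots := by
      rw [hchar, roots_mul (mul_ne_zero F.charpoly_monic.ne_zero G.charpoly_monic.ne_zero),
        hFchar, roots_pow, roots_X_sub_C]
    rw [htr k, hFtr, hGtr, hroots]
    rw [Multiset.map_add, Multiset.sum_add]
    congr 1
    rw [Multiset.map_nsmul, Multiset.map_singleton, Multiset.sum_nsmul, Multiset.sum_singleton,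
      nsmul_eq_mul]
end

section
open Polynomial Finset

lemma multiset_newton {K : Type*} [Field K] (s : Multiset K) (k : ℕ) :
    (k : K) * s.esymm k = (-1) ^ (k + 1) *
      ∑ a ∈ (antidiagonal k).filter (fun a => a.1 < k),
        (-1) ^ a.1 * s.esymm a.1 * ((s.map (· ^ a.2)).sum) := by
  classical
  set r : Fin s.toList.length → K := s.toList.get with hr
  have hs : Finset.univ.val.map r = s := by
    rw [hr, Fin.univ_val_map, List.ofFn_get, Multiset.coe_toList]
  have hesymm : ∀ j, MvPolynomial.aeval r (MvPolynomial.esymm (Fin s.toList.length) K j)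
      = s.esymm j := by
    intro j
    rw [MvPolynomial.aeval_esymm_eq_multiset_esymm, hs]
  have hpsum : ∀ j, MvPolynomial.aeval r (MvPolynomial.psum (Fin s.toList.length) K j)
      = (s.map (· ^ j)).sum := by
    intro j
    rw [MvPolynomial.psum, map_sum]
    simp only [map_pow, MvPolynomial.aeval_X]
    conv_rhs => rw [← hs, Multiset.map_map]
    rfl
  have h := congrArg (MvPolynomial.aeval r)
    (MvPolynomial.mul_esymm_eq_sum (Fin s.toList.length) K k)
  simpa only [map_mul, map_natCast, map_pow, map_neg, map_one, map_sum, hesymm, hpsum] using h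
end

section
open Polynomial Module Module.Free LinearMap

lemma matrix_trace_pow_eq_sum_pow_roots {K : Type u} [Field K] [IsAlgClosed K] {n : ℕ}
    (M : Matrix (Fin n) (Fin n) K) (k : ℕ) (hk : 0 < k) :
    (M ^ k).trace = (M.charpoly.roots.map (· ^ k)).sum := by
  classical
  set b := Pi.basisFun K (Fin n) with hb
  set f := Matrix.toLinAlgEquiv b M with hf
  have hfM : LinearMap.toMatrixAlgEquiv b f = M := by
    rw [hf, Matrix.toLinAlgEquiv, AlgEquiv.apply_symm_apply]
  have hchar : f.charpoly = M.charpoly := by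
    rw [← LinearMap.charpoly_toMatrix f b]
    congr 1
  have hpow : LinearMap.toMatrixAlgEquiv b (f ^ k) = M ^ k := by
    rw [map_pow, hfM]
  have htrace : trace K (Fin n → K) (f ^ k) = (M ^ k).trace := by
    rw [LinearMap.trace_eq_matrix_trace K b (f ^ k)]
    rw [show LinearMap.toMatrix b b (f ^ k) = LinearMap.toMatrixAlgEquiv b (f ^ k) from rfl, hpow]
  rw [← htrace, ← hchar]
  exact end_trace_pow_eq_sum_pow_roots (finrank K (Fin n → K)) (Fin n → K) rfl f k hk
end

section
open Polynomial Finset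

theorem odd_charpoly_coeffs_vanish_of_odd_power_traces
    (F : Type*) [Field F] [CharZero F] (n : ℕ) (hn : Odd n)
    (t : Matrix (Fin n) (Fin n) F)
    (htr : ∀ i : ℕ, Odd i → 0 < i → i < n → (t ^ i).trace = 0) :
    ∀ i : ℕ, Odd i → 0 < i → i < n → (Matrix.charpoly t).coeff (n - i) = 0 := by
  classical
  set K := AlgebraicClosure F with hK
  set φ := algebraMap F K with hφ
  set M := φ.mapMatrix t with hM
  have hcp : M.charpoly = t.charpoly.map φ := Matrix.charpoly_map t φ
  have hdeg : M.charpoly.natDegree = n := by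
    rw [Matrix.charpoly_natDegree_eq_dim, Fintype.card_fin]
  have hmon : M.charpoly.Monic := M.charpoly_monic
  have hsplits : M.charpoly.Splits := IsAlgClosed.splits M.charpoly
  set s := M.charpoly.roots with hs
  have hcard : Multiset.card s = n := by
    rw [hs, splits_iff_card_roots.mp hsplits, hdeg]
  have hMtr : ∀ j : ℕ, Odd j → 0 < j → j < n → (s.map (· ^ j)).sum = 0 := by
    intro j hj hj0 hjn
    rw [← matrix_trace_pow_eq_sum_pow_roots M j hj0]
    have h1 : M ^ j = φ.mapMatrix (t ^ j) := by rw [hM, map_pow]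
    rw [h1]
    have h2 : (φ.mapMatrix (t ^ j)).trace = φ ((t ^ j).trace) := by
      simp [Matrix.trace, Matrix.diag, RingHom.mapMatrix_apply, Matrix.map_apply, map_sum]
    rw [h2, htr j hj hj0 hjn, map_zero]
  have hesymm : ∀ j : ℕ, Odd j → j < n → s.esymm j = 0 := by
    intro j
    induction j using Nat.strong_induction_on with
    | _ j IHj =>
    intro hj hjn
    have hnewton := multiset_newton s j
    have hzero : ∀ a ∈ (antidiagonal j).filter (fun a => a.1 < j),
        (-1 : K) ^ a.1 * s.esymm a.1 * ((s.map (· ^ a.2)).sum) = 0 := by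
      intro a ha
      simp only [Finset.mem_filter, Finset.HasAntidiagonal.mem_antidiagonal] at ha
      obtain ⟨hsum, hlt⟩ := ha
      rcases Nat.even_or_odd a.2 with he | ho
      · have h1 : Odd a.1 := by
          rcases he with ⟨c, hc⟩
          rcases hj with ⟨c', hc'⟩
          refine ⟨c' - c, ?_⟩
          omega
        have h3 : a.1 < n := by omega
        rw [IHj a.1 hlt h1 h3, mul_zero, zero_mul]
      · have h2 : 0 < a.2 := ho.pos
        have h4 : a.2 < n := by omega
        rw [hMtr a.2 ho h2 h4, mul_zero]
    rw [Finset.sum_eq_zero hzero, mul_zero] at hnewton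
    have hj0 : (j : K) ≠ 0 := Nat.cast_ne_zero.mpr hj.pos.ne'
    exact (mul_eq_zero.mp hnewton).resolve_left hj0
  intro i hi hi0 hin
  have key : M.charpoly.coeff (n - i) = 0 := by
    have hle : n - i ≤ M.charpoly.natDegree := by omega
    rw [Polynomial.coeff_eq_esymm_roots_of_splits hsplits hle, hmon.leadingCoeff, hdeg]
    have h5 : n - (n - i) = i := by omega
    rw [h5, hesymm i hi hin, mul_zero]
  rw [hcp, Polynomial.coeff_map] at key
  exact φ.injective (by rw [key, map_zero])
end
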